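/- Let ε₁,…,εₙ be i.i.d. N(0,σ²) with σ² > 0, and let (ε²)^{(n−i+1)} denote the i-th smallest among ε₁²,…,εₙ². For all α > 0 and κ ∈ (0,1) there exists c > 0 such that, for n large enough, with probability at least 1 − n^{−α}, (1/n)·∑_{i=1}^{⌊(1−κ)n⌋} (ε²)^{(n−i+1)} ≥ c·σ². -/

import Mathlib

open MeasureTheory ProbabilityTheory

/-- Sorting a tuple in ascending order: `ascSort v 0` is the smallest entry. -/
noncomputable def ascSort {n : ℕ} (v : Fin n → ℝ) : Fin n → ℝ :=
  v ∘ Tuple.sort v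

open Finset
lemma count_lt_ascSort {n : ℕ} (v : Fin n → ℝ) (t : ℝ) :
    (Finset.univ.filter fun i => ascSort v i < t).card
      = (Finset.univ.filter fun i => v i < t).card := by
  classical
  apply Finset.card_bij (fun i _ => Tuple.sort v i)
  · intro a ha
    simp only [mem_filter, mem_univ, true_and, ascSort, Function.comp_apply] at ha ⊢
    exact (Finset.mem_filter.mp ha).2
  · intro a _ b _ h; exact (Tuple.sort v).injective h
  · intro b hb
    refine ⟨(Tuple.sort v).symm b, ?_, by simp⟩
    simp only [mem_filter, mem_univ, true_and, ascSort, Function.comp_apply] at hb ⊢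
    exact Finset.mem_filter.mpr ⟨Finset.mem_univ _, by simpa [ascSort] using hb⟩

lemma ascSort_ge {n : ℕ} (v : Fin n → ℝ) (t : ℝ) (i : Fin n)
    (hi : (Finset.univ.filter fun j => v j < t).card ≤ (i : ℕ)) : t ≤ ascSort v i := by
  classical
  by_contra h
  push_neg at h
  have hmono : Monotone (ascSort v) := Tuple.monotone_sort v
  have hsub : Finset.Iic i ⊆ Finset.univ.filter fun j => ascSort v j < t := by
    intro j hj
    simp only [mem_filter, mem_univ, true_and]
    exact lt_of_le_of_lt (hmono (Finset.mem_Iic.mp hj)) h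
  have hcard := Finset.card_le_card hsub
  rw [count_lt_ascSort] at hcard
  have : (Finset.Iic i).card = (i : ℕ) + 1 := by
    simp
  omega

lemma sum_smallest_ge {n m : ℕ} (hm : m ≤ n) (v : Fin n → ℝ) (hv : ∀ i, 0 ≤ v i)
    {t : ℝ} (ht : 0 ≤ t) :
    ((m : ℝ) - (Finset.univ.filter fun i => v i < t).card) * t
      ≤ ∑ i ∈ Finset.univ.filter (fun i : Fin n => (i : ℕ) < m), ascSort v i := by
  classical
  set k := (Finset.univ.filter fun i => v i < t).card with hk
  have hvs : ∀ i, 0 ≤ ascSort v i := fun i => hv _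
  by_cases hkm : m ≤ k
  · have h1 : ((m : ℝ) - k) * t ≤ 0 := by
      apply mul_nonpos_of_nonpos_of_nonneg _ ht
      have : (m : ℝ) ≤ k := Nat.cast_le.mpr hkm
      linarith
    exact h1.trans (Finset.sum_nonneg fun i _ => hvs i)
  push_neg at hkm
  set F := Finset.univ.filter (fun i : Fin n => k ≤ (i : ℕ) ∧ (i : ℕ) < m) with hF
  have hsub : F ⊆ Finset.univ.filter (fun i : Fin n => (i : ℕ) < m) := by
    intro i hi
    simp only [hF, mem_filter, mem_univ, true_and] at hi ⊢
    exact hi.2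
  have hcardF : F.card = m - k := by
    have : F.card = (Finset.Ico k m).card := by
      refine Finset.card_bij (fun (i : Fin n) _ => (i : ℕ)) ?_ ?_ ?_
      · intro a ha
        simp only [hF, mem_filter, mem_univ, true_and] at ha
        exact Finset.mem_Ico.mpr ha
      · intro a _ b _ h; exact Fin.val_injective h
      · intro b hb
        rw [Finset.mem_Ico] at hb
        exact ⟨⟨b, lt_of_lt_of_le hb.2 hm⟩, by simp [hF, hb.1, hb.2], rfl⟩
    rw [this, Nat.card_Ico]
  calc ((m : ℝ) - k) * t = ((m - k : ℕ) : ℝ) * t := by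
        rw [Nat.cast_sub hkm.le]
    _ = ∑ _i ∈ F, t := by rw [Finset.sum_const, hcardF, nsmul_eq_mul]
    _ ≤ ∑ i ∈ F, ascSort v i := by
        apply Finset.sum_le_sum
        intro i hi
        simp only [hF, mem_filter, mem_univ, true_and] at hi
        exact ascSort_ge v t i hi.1
    _ ≤ ∑ i ∈ Finset.univ.filter (fun i : Fin n => (i : ℕ) < m), ascSort v i :=
        Finset.sum_le_sum_of_subset_of_nonneg hsub fun i _ _ => hvs i

open Real in
lemma gauss_Ioo_le (σ2 : NNReal) (hσ : σ2 ≠ 0) {s : ℝ} (hs : 0 ≤ s) :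
    gaussianReal 0 σ2 (Set.Ioo (-s) s)
      ≤ ENNReal.ofReal (2 * s * (Real.sqrt (2 * π * σ2))⁻¹) := by
  rw [gaussianReal_apply _ hσ]
  have hpt : ∀ x : ℝ, gaussianPDF 0 σ2 x ≤ ENNReal.ofReal ((Real.sqrt (2 * π * σ2))⁻¹) := by
    intro x
    apply ENNReal.ofReal_le_ofReal
    unfold gaussianPDFReal
    have h1 : rexp (-(x - 0) ^ 2 / (2 * σ2)) ≤ 1 := by
      rw [Real.exp_le_one_iff]
      apply div_nonpos_of_nonpos_of_nonneg
      · simp [sq_nonneg]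
      · positivity
    calc (√(2 * π * σ2))⁻¹ * rexp (-(x - 0) ^ 2 / (2 * σ2))
        ≤ (√(2 * π * σ2))⁻¹ * 1 := by
          apply mul_le_mul_of_nonneg_left h1 (by positivity)
      _ = (√(2 * π * σ2))⁻¹ := mul_one _
  calc ∫⁻ x in Set.Ioo (-s) s, gaussianPDF 0 σ2 x
      ≤ ∫⁻ _x in Set.Ioo (-s) s, ENNReal.ofReal ((Real.sqrt (2 * π * σ2))⁻¹) :=
        lintegral_mono fun x => hpt x
    _ = ENNReal.ofReal ((Real.sqrt (2 * π * σ2))⁻¹) * volume (Set.Ioo (-s) s) :=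
        setLIntegral_const _ _
    _ = ENNReal.ofReal ((Real.sqrt (2 * π * σ2))⁻¹) * ENNReal.ofReal (2 * s) := by
        rw [Real.volume_Ioo]; ring_nf
    _ = ENNReal.ofReal (2 * s * (Real.sqrt (2 * π * σ2))⁻¹) := by
        rw [← ENNReal.ofReal_mul (by positivity)]; ring_nf

set_option maxHeartbeats 1000000 in
/-- `Θ(n)` points amount to a constant fraction of Gaussian noise: for i.i.d.
`ε₁,…,εₙ ~ N(0,σ²)`, all `α > 0` and `κ ∈ (0,1)` there is `c > 0` such that for `n` large
enough, with probability at least `1 - n^{-α}`, the average of the `⌊(1-κ)n⌋` smallest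
squared noise values is at least `c σ²`. -/
theorem bottom_order_statistics_sum_large
    (σ2 : NNReal) (hσ : 0 < σ2) (α κ : ℝ) (hα : 0 < α) (hκ : κ ∈ Set.Ioo (0 : ℝ) 1) :
    ∃ c : ℝ, 0 < c ∧ ∃ n0 : ℕ, ∀ n ≥ n0,
      ∀ (Ω : Type) (_mΩ : MeasurableSpace Ω) (P : Measure Ω), IsProbabilityMeasure P →
      ∀ ε : Fin n → Ω → ℝ, (∀ i, Measurable (ε i)) →
        iIndepFun ε P →
        (∀ i, Measure.map (ε i) P = gaussianReal 0 σ2) →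
        ENNReal.ofReal (1 - (n : ℝ) ^ (-α)) ≤
          P {ω | c * (σ2 : ℝ) ≤ (1 / (n : ℝ)) *
              ∑ i ∈ Finset.univ.filter (fun i : Fin n => (i : ℕ) < Nat.floor ((1 - κ) * n)),
                ascSort (fun j => (ε j ω) ^ 2) i} := by
  classical
  obtain ⟨hκ0, hκ1⟩ := hκ
  set q : ℝ := (1 - κ) / 2 with hqdef
  have hq : 0 < q := by rw [hqdef]; linarith
  have hσR : (0:ℝ) < (σ2:ℝ) := by exact_mod_cast hσ
  set s : ℝ := q * Real.sqrt (2 * Real.pi * σ2) / 4 with hsdef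
  have hsqrtpos : 0 < Real.sqrt (2 * Real.pi * σ2) :=
    Real.sqrt_pos.mpr (by positivity)
  have hs : 0 < s := by rw [hsdef]; positivity
  set β : ℝ := q * (3 - Real.exp 1) / 2 with hβdef
  clear_value q s β
  have he3 : Real.exp 1 < 3 := by
    have := Real.exp_one_lt_d9; linarith
  have he1 : 1 ≤ Real.exp 1 := by
    have := Real.add_one_le_exp (1:ℝ); linarith [Real.exp_one_gt_d9]
  have hβ : 0 < β := by
    rw [hβdef]; apply div_pos (mul_pos hq (by linarith)) two_pos
  refine ⟨q * s ^ 2 / (2 * σ2), div_pos (by positivity) (by linarith), ?_⟩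
  have hlog : ∀ᶠ (x : ℝ) in Filter.atTop, α * Real.log x ≤ β * x := by
    have h := Real.isLittleO_log_id_atTop.def (show 0 < β / α by positivity)
    filter_upwards [h, Filter.eventually_ge_atTop (1:ℝ)] with x hx hx1
    rw [Real.norm_eq_abs, Real.norm_eq_abs, id_eq] at hx
    rw [abs_of_nonneg (Real.log_nonneg hx1), abs_of_nonneg (by linarith : (0:ℝ) ≤ x)] at hx
    have h2 : α * Real.log x ≤ α * (β / α * x) :=
      mul_le_mul_of_nonneg_left hx hα.le
    have h3 : α * (β / α * x) = β * x := by field_simp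
    linarith
  obtain ⟨N₁, hN₁⟩ := Filter.eventually_atTop.mp
    (tendsto_natCast_atTop_atTop.eventually hlog)
  obtain ⟨N₂, hN₂⟩ := Filter.eventually_atTop.mp
    (tendsto_natCast_atTop_atTop.eventually (Filter.eventually_ge_atTop (2 / q)))
  refine ⟨max (max N₁ N₂) 1, fun n hn Ω _mΩ P hP ε hε hindep hmap => ?_⟩
  have hn1 : 1 ≤ n := le_trans (le_max_right _ 1) hn
  have hnN1 : N₁ ≤ n := le_trans (le_trans (le_max_left _ _) (le_max_left _ _)) hn
  have hnN2 : N₂ ≤ n := le_trans (le_trans (le_max_right _ _) (le_max_left _ _)) hn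
  have hnR : (0:ℝ) < (n:ℝ) := by exact_mod_cast hn1
  have hqn2 : 2 ≤ q * n := by
    have h := hN₂ n hnN2
    rw [div_le_iff₀ hq] at h; linarith
  -- indicator variables
  set g : ℝ → ℝ := fun x => if x ^ 2 < s ^ 2 then 1 else 0 with hgdef
  have hsetm : MeasurableSet {x : ℝ | x ^ 2 < s ^ 2} :=
    measurableSet_lt (by measurability) measurable_const
  have hg : Measurable g := Measurable.ite hsetm measurable_const measurable_const
  set X : Fin n → Ω → ℝ := fun i ω => g (ε i ω) with hXdef
  have hXmeas : ∀ i, Measurable (X i) := by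
    intro i; rw [hXdef]; exact hg.comp (hε i)
  have hXindep : iIndepFun X P := by
    rw [hXdef]; exact hindep.comp (fun _ => g) (fun _ => hg)
  set A : Fin n → Set Ω := fun i => ε i ⁻¹' {x | x ^ 2 < s ^ 2} with hAdef
  clear_value g X A
  have hA : ∀ i, MeasurableSet (A i) := by
    intro i; rw [hAdef]; exact (hε i) hsetm
  have hXind : ∀ i, X i = (A i).indicator (fun _ => (1:ℝ)) := by
    intro i; funext ω
    simp only [hXdef, hgdef, hAdef, Set.indicator_apply, Set.mem_preimage, Set.mem_setOf_eq]
  have hIe : {x : ℝ | x ^ 2 < s ^ 2} = Set.Ioo (-s) s := by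
    ext x
    simp only [Set.mem_setOf_eq, Set.mem_Ioo]
    constructor
    · intro h; constructor <;> nlinarith
    · rintro ⟨h1, h2⟩; nlinarith
  have hPA : ∀ i, P (A i) = gaussianReal 0 σ2 (Set.Ioo (-s) s) := by
    intro i
    rw [hAdef]
    show P (ε i ⁻¹' {x | x ^ 2 < s ^ 2}) = _
    rw [← Measure.map_apply (hε i) hsetm, hmap i, hIe]
  have hGle : gaussianReal 0 σ2 (Set.Ioo (-s) s) ≤ ENNReal.ofReal (q / 2) := by
    refine (gauss_Ioo_le σ2 hσ.ne' hs.le).trans ?_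
    apply ENNReal.ofReal_le_ofReal
    have heq : ∀ r : ℝ, r ≠ 0 → 2 * (q * r / 4) * r⁻¹ = q / 2 := by
      intro r hr; field_simp; ring
    rw [hsdef, heq _ hsqrtpos.ne']
  set p : ℝ := (gaussianReal 0 σ2 (Set.Ioo (-s) s)).toReal with hpdef
  clear_value p
  have hp0 : 0 ≤ p := by rw [hpdef]; exact ENNReal.toReal_nonneg
  have hple : p ≤ q / 2 := by
    rw [hpdef]
    exact ENNReal.toReal_le_of_le_ofReal (by positivity) hGle
  have hXint : ∀ i, Integrable (X i) P := by
    intro i; rw [hXind i]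
    exact (integrable_const (1:ℝ)).indicator (hA i)
  have hXavg : ∀ i, ∫ ω, X i ω ∂P = p := by
    intro i
    rw [show (fun ω => X i ω) = X i from rfl, hXind i,
      integral_indicator_const _ (hA i), measureReal_def, hPA i, hpdef, smul_eq_mul, mul_one]
  have hexpX : ∀ i, (fun ω => Real.exp (1 * X i ω))
      = fun ω => 1 + (Real.exp 1 - 1) * X i ω := by
    intro i; funext ω
    rw [hXdef]
    by_cases hc : (ε i ω) ^ 2 < s ^ 2 <;> simp [hgdef, hc]
  have hintexp : ∀ i, Integrable (fun ω => Real.exp (1 * X i ω)) P := by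
    intro i
    rw [hexpX i]
    exact (integrable_const 1).add ((hXint i).const_mul _)
  have hmgf : ∀ i, mgf (X i) P 1 = 1 + (Real.exp 1 - 1) * p := by
    intro i
    rw [mgf, hexpX i, integral_add (integrable_const 1) ((hXint i).const_mul _),
      integral_const, MeasureTheory.integral_const_mul, hXavg i]
    simp
  set S : Ω → ℝ := fun ω => ∑ i, X i ω with hSdef
  clear_value S
  have hSsum : S = ∑ i, X i := by rw [hSdef]; funext ω; simp
  have hSmeas : Measurable S := by
    rw [hSdef]; exact Finset.measurable_sum _ fun i _ => hXmeas i
  set B : Set Ω := {ω | q * n ≤ S ω} with hBdef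
  clear_value B
  have hBm : MeasurableSet B := by
    rw [hBdef]; exact measurableSet_le measurable_const hSmeas
  have hchern : (P B).toReal ≤ Real.exp (-(β * n)) := by
    have hintS : Integrable (fun ω => Real.exp (1 * S ω)) P := by
      rw [hSsum]
      exact iIndepFun.integrable_exp_mul_sum hXindep hXmeas (fun i _ => hintexp i)
    have h1 := measure_ge_le_exp_mul_mgf (μ := P) (X := S) (t := 1) (q * n) zero_le_one hintS
    have h2 : mgf S P 1 = ∏ i : Fin n, mgf (X i) P 1 := by
      rw [hSsum]; exact hXindep.mgf_sum hXmeas Finset.univ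
    have h3 : ∏ i : Fin n, mgf (X i) P 1 ≤ Real.exp ((Real.exp 1 - 1) * p) ^ n := by
      have := Finset.prod_le_prod (s := (Finset.univ : Finset (Fin n)))
        (f := fun i => mgf (X i) P 1) (g := fun _ => Real.exp ((Real.exp 1 - 1) * p))
        (fun i _ => mgf_nonneg) (fun i _ => by
          show mgf (X i) P 1 ≤ _
          rw [hmgf i, add_comm]; exact Real.add_one_le_exp _)
      simpa using this
    rw [hBdef]
    calc (P {ω | q * ↑n ≤ S ω}).toReal
        ≤ Real.exp (-1 * (q * n)) * mgf S P 1 := h1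
      _ ≤ Real.exp (-1 * (q * n)) * Real.exp ((Real.exp 1 - 1) * p) ^ n := by
          rw [h2]
          exact mul_le_mul_of_nonneg_left h3 (Real.exp_pos _).le
      _ = Real.exp (-(q * n) + n * ((Real.exp 1 - 1) * p)) := by
          rw [← Real.exp_nat_mul, ← Real.exp_add]; ring_nf
      _ ≤ Real.exp (-(β * n)) := by
          apply Real.exp_le_exp.mpr
          have h4 : (n:ℝ) * ((Real.exp 1 - 1) * p) ≤ (n:ℝ) * ((Real.exp 1 - 1) * (q / 2)) := by
            apply mul_le_mul_of_nonneg_left _ (Nat.cast_nonneg n)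
            exact mul_le_mul_of_nonneg_left hple (by linarith)
          have h5 : -(q * n) + (n:ℝ) * ((Real.exp 1 - 1) * (q / 2)) = -(β * n) := by
            rw [hβdef]; ring
          linarith
  have htail : (P B).toReal ≤ (n:ℝ) ^ (-α) := by
    refine hchern.trans ?_
    have hlogn := hN₁ n hnN1
    rw [Real.rpow_def_of_pos hnR]
    apply Real.exp_le_exp.mpr
    have : Real.log n * (-α) = -(α * Real.log n) := by ring
    linarith
  -- deterministic part
  have hmn : Nat.floor ((1 - κ) * n) ≤ n := by
    have h1 : (1 - κ) * n ≤ (n:ℝ) := by nlinarith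
    calc Nat.floor ((1 - κ) * n) ≤ Nat.floor ((n:ℝ)) := Nat.floor_le_floor h1
      _ = n := Nat.floor_natCast n
  have hmlb : (1 - κ) * n - 1 < (Nat.floor ((1 - κ) * n) : ℝ) := by
    have := Nat.lt_floor_add_one ((1 - κ) * n)
    linarith
  have hsubset : Bᶜ ⊆ {ω | q * s ^ 2 / (2 * σ2) * σ2 ≤ (1 / (n : ℝ)) *
      ∑ i ∈ Finset.univ.filter (fun i : Fin n => (i : ℕ) < Nat.floor ((1 - κ) * n)),
        ascSort (fun j => (ε j ω) ^ 2) i} := by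
    intro ω hω
    rw [hBdef] at hω
    simp only [Set.mem_compl_iff, Set.mem_setOf_eq, not_le] at hω
    have hSω : S ω = ((Finset.univ.filter
        (fun i => (ε i ω) ^ 2 < s ^ 2)).card : ℝ) := by
      rw [hSdef]
      simp only [hXdef, hgdef]
      rw [Finset.sum_boole]
    set k := (Finset.univ.filter (fun i : Fin n => (ε i ω) ^ 2 < s ^ 2)).card with hkdef
    have hkq : (k:ℝ) < q * n := by rw [← hSω]; exact hω
    have hsum := sum_smallest_ge hmn (fun j => (ε j ω) ^ 2)
      (fun i => sq_nonneg _) (sq_nonneg s)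
    rw [← hkdef] at hsum
    have hmk : q * n / 2 ≤ ((Nat.floor ((1 - κ) * n) : ℝ)) - k := by
      have h2q : (1 - κ) * (n:ℝ) = 2 * (q * n) := by rw [hqdef]; ring
      linarith [hmlb, hkq, hqn2]
    have hfinal : q * n / 2 * s ^ 2 ≤
        ∑ i ∈ Finset.univ.filter (fun i : Fin n => (i : ℕ) < Nat.floor ((1 - κ) * n)),
          ascSort (fun j => (ε j ω) ^ 2) i := by
      refine le_trans ?_ hsum
      exact mul_le_mul_of_nonneg_right hmk (sq_nonneg s)
    show q * s ^ 2 / (2 * σ2) * σ2 ≤ _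
    have hceq : q * s ^ 2 / (2 * (σ2:ℝ)) * σ2 = q * s ^ 2 / 2 := by
      rw [div_mul_eq_mul_div, mul_comm (2:ℝ) (σ2:ℝ), ← div_div,
        mul_div_assoc, div_self hσR.ne', mul_one]
    rw [hceq]
    calc q * s ^ 2 / 2 = (1 / (n:ℝ)) * (q * n / 2 * s ^ 2) := by
          field_simp
      _ ≤ (1 / (n:ℝ)) * _ := mul_le_mul_of_nonneg_left hfinal (by positivity)
  calc ENNReal.ofReal (1 - (n:ℝ) ^ (-α))
      = 1 - ENNReal.ofReal ((n:ℝ) ^ (-α)) := by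
        rw [ENNReal.ofReal_sub _ (Real.rpow_nonneg (Nat.cast_nonneg n) _), ENNReal.ofReal_one]
    _ ≤ 1 - P B := by
        apply tsub_le_tsub_left
        rw [← ENNReal.ofReal_toReal (measure_ne_top P B)]
        exact ENNReal.ofReal_le_ofReal htail
    _ = P Bᶜ := (prob_compl_eq_one_sub hBm).symm
    _ ≤ _ := measure_mono hsubset
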